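/- Let L : V → [k] be a labeling of n vertices and let ỹ^L ∈ ℝ^{nk} be its normalized characteristic vector (with entries 1/√n at positions (u, L(u)) and 0 elsewhere). Suppose x ∈ ℝ^{nk} can be written x = α·ỹ^L + β·y_⊥, where α > 0 and y_⊥ is a unit vector orthogonal to ỹ^L. Then the number of vertices u for which there exists some j ≠ L(u) with x(u,j) ≥ x(u, L(u)) is at most (2β²/α²)·n. In particular, in at least (1 − 2β²/α²)·n of the n blocks, the coordinate x(u, L(u)) is the strict maximum of the block (x(u,1), …, x(u,k)). -/

import Mathlib

open Finset RealInnerProductSpace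

set_option maxHeartbeats 1000000

/-- If `x = α ỹ^L + β y_⊥` with `α > 0` and `y_⊥` a unit vector
orthogonal to the normalized characteristic vector `ỹ^L`, then the number of blocks
`u` where the coordinate `x(u, L(u))` fails to be the strict maximum is at most
`(2β²/α²)·n`; in particular, in at least `(1 − 2β²/α²)·n` blocks it is the strict
maximum. -/
theorem decoding_recovers_most_labels
    {n k : ℕ} (L : Fin n → Fin k)
    (ytil : EuclideanSpace ℝ (Fin n × Fin k))
    (hytil : ∀ p, ytil p = if p.2 = L p.1 then 1 / Real.sqrt n else 0)
    (α β : ℝ) (hα : 0 < α)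
    (yperp : EuclideanSpace ℝ (Fin n × Fin k))
    (hyperp : ‖yperp‖ = 1) (horth : ⟪yperp, ytil⟫ = 0)
    (x : EuclideanSpace ℝ (Fin n × Fin k))
    (hx : x = α • ytil + β • yperp) :
    (Nat.card {u : Fin n // ∃ j : Fin k, j ≠ L u ∧ x (u, L u) ≤ x (u, j)} : ℝ)
        ≤ (2 * β ^ 2 / α ^ 2) * n ∧
    (1 - 2 * β ^ 2 / α ^ 2) * n
        ≤ (Nat.card {u : Fin n // ∀ j : Fin k, j ≠ L u → x (u, j) < x (u, L u)} : ℝ) := by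
  classical
  set P : Fin n → Prop := fun u => ∃ j : Fin k, j ≠ L u ∧ x (u, L u) ≤ x (u, j) with hP
  set S : Finset (Fin n) := Finset.univ.filter P with hS
  have hxp : ∀ p : Fin n × Fin k, x p = α * ytil p + β * yperp p := by
    intro p; rw [hx]; rfl
  have hcard1 : Nat.card {u : Fin n // P u} = S.card := by
    rw [Nat.card_eq_fintype_card, Fintype.card_subtype]
  have hcard2 : Nat.card {u : Fin n // ∀ j : Fin k, j ≠ L u → x (u, j) < x (u, L u)}
      = n - S.card := by
    have hiff : ∀ u : Fin n,
        (∀ j : Fin k, j ≠ L u → x (u, j) < x (u, L u)) ↔ ¬ P u := by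
      intro u
      constructor
      · rintro h ⟨j, hj, hle⟩; exact absurd hle (not_le.2 (h j hj))
      · intro h j hj; by_contra hc; exact h ⟨j, hj, not_lt.1 hc⟩
    rw [Nat.card_eq_fintype_card]
    rw [Fintype.card_subtype]
    have : Finset.univ.filter (fun u => ∀ j : Fin k, j ≠ L u → x (u, j) < x (u, L u))
        = Finset.univ.filter (fun u => ¬ P u) := by
      apply Finset.filter_congr; intro u _; simpa using hiff u
    rw [this, Finset.filter_not, Finset.card_sdiff_of_subset (Finset.filter_subset _ _)]
    simp [hS]
  have hSn : S.card ≤ n := by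
    simpa using Finset.card_le_univ S
  have hnorm : ∑ p : Fin n × Fin k, (yperp p) ^ 2 = 1 := by
    have h := real_inner_self_eq_norm_sq yperp
    rw [hyperp] at h
    rw [PiLp.inner_apply] at h
    simpa [sq] using h
  by_cases hSe : S = ∅
  · constructor
    · rw [hP] at hcard1
      rw [hcard1, hSe]
      have : (0:ℝ) ≤ 2 * β ^ 2 / α ^ 2 * n := by positivity
      simpa using this
    · rw [hcard2, hSe]
      simp only [Finset.card_empty, Nat.sub_zero]
      have hc : (0:ℝ) ≤ 2 * β ^ 2 / α ^ 2 := by positivity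
      nlinarith [Nat.cast_nonneg (α := ℝ) n]
  · obtain ⟨u0, hu0⟩ := Finset.nonempty_of_ne_empty hSe
    have hn0 : 0 < (n:ℝ) := by exact_mod_cast u0.pos
    have hsqrt : (0:ℝ) < Real.sqrt n := Real.sqrt_pos.2 hn0
    have hβ : β ≠ 0 := by
      obtain ⟨j, hj, hle⟩ := (Finset.mem_filter.1 hu0).2
      rw [hxp, hxp] at hle
      have e0 : ytil (u0, L u0) = 1 / Real.sqrt n := by rw [hytil]; simp
      have e1 : ytil (u0, j) = 0 := by rw [hytil]; simp [hj]
      rw [e0, e1] at hle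
      intro hb
      rw [hb] at hle
      have h1 : α * (1 / Real.sqrt n) ≤ 0 := by linarith
      have h2 : 0 < α * (1 / Real.sqrt n) := by positivity
      linarith
    have hβ2 : (0:ℝ) < β ^ 2 := by positivity
    have key : ∀ u ∈ S, α ^ 2 / (2 * β ^ 2 * n) ≤ ∑ j : Fin k, (yperp (u, j)) ^ 2 := by
      intro u hu
      obtain ⟨j, hj, hle⟩ := (Finset.mem_filter.1 hu).2
      rw [hxp, hxp] at hle
      have e0 : ytil (u, L u) = 1 / Real.sqrt n := by rw [hytil]; simp
      have e1 : ytil (u, j) = 0 := by rw [hytil]; simp [hj]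
      rw [e0, e1] at hle
      obtain ⟨a, ha⟩ : ∃ a : ℝ, yperp (u, L u) = a := ⟨_, rfl⟩
      obtain ⟨b, hb⟩ : ∃ b : ℝ, yperp (u, j) = b := ⟨_, rfl⟩
      rw [ha, hb] at hle
      have h1 : α / Real.sqrt n ≤ β * (b - a) := by
        have e : α / Real.sqrt n = α * (1 / Real.sqrt n) := by ring
        have e' : β * (b - a) = β * b - β * a := by ring
        rw [e, e']
        linarith
      have hA : 0 ≤ α / Real.sqrt n := by positivity
      have h2 : (α / Real.sqrt n) ^ 2 ≤ (β * (b - a)) ^ 2 :=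
        pow_le_pow_left₀ hA h1 2
      have hsq : Real.sqrt n ^ 2 = n := Real.sq_sqrt hn0.le
      have h2' : α ^ 2 / n ≤ β ^ 2 * (b - a) ^ 2 := by
        rw [div_pow, hsq] at h2
        nlinarith
      have h3 : α ^ 2 / (2 * β ^ 2 * n) ≤ b ^ 2 + a ^ 2 := by
        rw [div_le_iff₀ (by positivity : (0:ℝ) < 2 * β ^ 2 * n)]
        rw [div_le_iff₀ hn0] at h2'
        nlinarith [sq_nonneg (a + b), sq_nonneg (b - a), mul_nonneg (mul_nonneg hβ2.le (sq_nonneg (a + b))) hn0.le]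
      refine h3.trans ?_
      have hpair : b ^ 2 + a ^ 2 = ∑ i ∈ ({j, L u} : Finset (Fin k)), (yperp (u, i)) ^ 2 := by
        rw [Finset.sum_pair hj, ha, hb]
      rw [hpair]
      exact Finset.sum_le_sum_of_subset_of_nonneg (Finset.subset_univ _)
        (fun i _ _ => sq_nonneg _)
    have hsum : (S.card : ℝ) * (α ^ 2 / (2 * β ^ 2 * n)) ≤ 1 := by
      calc (S.card : ℝ) * (α ^ 2 / (2 * β ^ 2 * n))
          = ∑ _u ∈ S, α ^ 2 / (2 * β ^ 2 * n) := by
            rw [Finset.sum_const, nsmul_eq_mul]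
        _ ≤ ∑ u ∈ S, ∑ j : Fin k, (yperp (u, j)) ^ 2 := Finset.sum_le_sum key
        _ ≤ ∑ u : Fin n, ∑ j : Fin k, (yperp (u, j)) ^ 2 :=
            Finset.sum_le_sum_of_subset_of_nonneg (Finset.subset_univ _)
              (fun u _ _ => Finset.sum_nonneg fun j _ => sq_nonneg _)
        _ = ∑ p : Fin n × Fin k, (yperp p) ^ 2 := by rw [← Finset.univ_product_univ, Finset.sum_product]
        _ = 1 := hnorm
    have hmain : (S.card : ℝ) * α ^ 2 ≤ 2 * β ^ 2 * n := by
      have he : (S.card : ℝ) * (α ^ 2 / (2 * β ^ 2 * n))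
          = ((S.card : ℝ) * α ^ 2) / (2 * β ^ 2 * n) := by ring
      rw [he, div_le_one (by positivity : (0:ℝ) < 2 * β ^ 2 * n)] at hsum
      exact hsum
    have goal1 : (S.card : ℝ) ≤ 2 * β ^ 2 / α ^ 2 * n := by
      rw [div_mul_eq_mul_div, le_div_iff₀ (by positivity : (0:ℝ) < α ^ 2)]
      nlinarith
    constructor
    · rw [hP] at hcard1
      rw [hcard1]
      exact goal1
    · rw [hcard2, Nat.cast_sub hSn]
      linarith
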